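/- Assume b > (n−1)a > 0 and write b = ra + b' with 0 ≤ b' < a (so r ≥ n−1). Let (λ,μ) be a bipartition of n with λ ≠ ∅ and set l := |λ| ≤ N + r. Then λ_l + N + r − l ≥ μ_1 + N − 1, and consequently the l largest entries of the multiset Z^N_{a,b}(λ,μ) (entries (λ_i+N+r−i)a+b' for i ≤ N+r and (μ_j+N−j)a for j ≤ N) are exactly (λ_i + N + r − i)a + b' for 1 ≤ i ≤ l. -/

import Mathlib

def psum (f : ℕ → ℕ) (d : ℕ) : ℕ := ∑ i ∈ Finset.range d, f i
def dsort (M : Multiset ℕ) : List ℕ := (M.sort (· ≤ ·)).reverse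
def Zab (a b' r N : ℕ) (l m : ℕ → ℕ) : Multiset ℕ :=
  ((Finset.range (N + r)).val.map fun i => (l i + (N + r - 1 - i)) * a + b') +
  ((Finset.range N).val.map fun j => (m j + (N - 1 - j)) * a)

lemma dsort_coe (M : Multiset ℕ) : (↑(dsort M) : Multiset ℕ) = M := by
  unfold dsort
  rw [Multiset.coe_reverse, Multiset.sort_eq]

lemma dsort_sorted (M : Multiset ℕ) : (dsort M).Pairwise (· ≥ ·) := by
  unfold dsort
  rw [List.pairwise_reverse]
  exact Multiset.pairwise_sort (s := M) (r := (· ≤ ·))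

lemma range_split (F : ℕ → ℕ) (L K : ℕ) :
    (Multiset.range (L + K)).map F
      = (↑((List.range L).map F) : Multiset ℕ) + ↑((List.range K).map fun t => F (L + t)) := by
  show Multiset.map F ↑(List.range (L + K)) = _
  rw [List.range_add, Multiset.map_coe, List.map_append, List.map_map, ← Multiset.coe_add]
  rfl

lemma dsort_take (R : Multiset ℕ) (lp : List ℕ)
    (hsorted : lp.Pairwise (· ≥ ·)) (hbound : ∀ x ∈ R, ∀ y ∈ lp, x ≤ y) :
    (dsort ((↑lp : Multiset ℕ) + R)).take lp.length = lp := by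
  have hC : dsort ((↑lp : Multiset ℕ) + R) = lp ++ dsort R := by
    refine (fun hp h1 h2 => List.Perm.eq_of_pairwise' (r := (· ≥ ·)) h1 h2 hp) ?_ ?_ ?_
    · rw [← Multiset.coe_eq_coe, dsort_coe, ← Multiset.coe_add, dsort_coe]
    · exact dsort_sorted _
    · rw [List.pairwise_append]
      refine ⟨hsorted, dsort_sorted R, ?_⟩
      intro y hy x hx
      have hxR : x ∈ R := by
        have := dsort_coe R ▸ (Multiset.mem_coe.mpr hx)
        exact this
      exact hbound x hxR y hy
  rw [hC, List.take_left]

theorem asymptotic_largest_entries (n a b r b' N : ℕ)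
    (hna : 0 < (n - 1) * a) (hab : (n - 1) * a < b)
    (hbr : b = r * a + b') (hb'a : b' < a)
    (l m : ℕ → ℕ) (hl : Antitone l) (hm : Antitone m)
    (hlN : ∀ i, N + r ≤ i → l i = 0) (hmN : ∀ j, N ≤ j → m j = 0)
    (hn : psum l (N + r) + psum m N = n)
    (L : ℕ) (hL : L = psum l (N + r)) (hL1 : 1 ≤ L) (hLN : L ≤ N + r) :
    m 0 + L ≤ l (L - 1) + r + 1 ∧
    (dsort (Zab a b' r N l m)).take L
      = (List.range L).map (fun i => (l i + (N + r - 1 - i)) * a + b') := by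
  have ha : 0 < a := by
    rcases Nat.eq_zero_or_pos a with h | h
    · simp [h] at hna
    · exact h
  have hnr : n ≤ r + 1 := by
    have h1 : (n - 1) * a < (r + 1) * a := by
      rw [hbr] at hab; nlinarith
    have := Nat.lt_of_mul_lt_mul_right h1
    omega
  have hm0 : m 0 ≤ psum m N := by
    rcases Nat.eq_zero_or_pos N with h | h
    · rw [hmN 0 (by omega)]; exact Nat.zero_le _
    · unfold psum; exact Finset.single_le_sum (fun i _ => Nat.zero_le (m i)) (Finset.mem_range.mpr h)
  have part1 : m 0 + L ≤ l (L - 1) + r + 1 := by omega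
  refine ⟨part1, ?_⟩
  set f : ℕ → ℕ := fun i => (l i + (N + r - 1 - i)) * a + b' with hf
  set g : ℕ → ℕ := fun j => (m j + (N - 1 - j)) * a with hg
  have hfa : Antitone f := by
    intro i j hij
    have h1 : l j ≤ l i := hl hij
    have h2 : l j + (N + r - 1 - j) ≤ l i + (N + r - 1 - i) := by omega
    exact Nat.add_le_add_right (Nat.mul_le_mul_right a h2) b'
  have hgf : ∀ j < N, g j ≤ f (L - 1) := by
    intro j hj
    have h1 : m j ≤ m 0 := hm (Nat.zero_le j)
    have h3 : m j + (N - 1 - j) ≤ l (L - 1) + (N + r - 1 - (L - 1)) := by omega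
    calc g j = (m j + (N - 1 - j)) * a := rfl
      _ ≤ (l (L - 1) + (N + r - 1 - (L - 1))) * a := Nat.mul_le_mul_right a h3
      _ ≤ f (L - 1) := Nat.le_add_right _ _
  set R : Multiset ℕ := (↑((List.range (N + r - L)).map fun t => f (L + t)) : Multiset ℕ)
      + ((Finset.range N).val.map g) with hR
  have e1 : (Finset.range (N + r)).val.map f
      = (↑((List.range L).map f) : Multiset ℕ) + ↑((List.range (N + r - L)).map fun t => f (L + t)) := by
    rw [Finset.range_val]
    conv_lhs => rw [show N + r = L + (N + r - L) from by omega]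
    exact range_split f L (N + r - L)
  have hZ : Zab a b' r N l m = (↑((List.range L).map f) : Multiset ℕ) + R := by
    unfold Zab
    rw [← hf, ← hg, e1, hR, add_assoc]
  have hs : ((List.range L).map f).Pairwise (· ≥ ·) := by
    rw [List.pairwise_map]
    refine List.Pairwise.imp ?_ (List.pairwise_lt_range (n := L))
    intro i j hij
    exact hfa (le_of_lt hij)
  have hb : ∀ x ∈ R, ∀ y ∈ (List.range L).map f, x ≤ y := by
    intro x hx y hy
    obtain ⟨i, hi, rfl⟩ := List.mem_map.mp hy
    have hiL : i < L := List.mem_range.mp hi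
    have hfy : f (L - 1) ≤ f i := hfa (by omega)
    rw [hR] at hx
    rcases Multiset.mem_add.mp hx with hx | hx
    · obtain ⟨t, ht, rfl⟩ := List.mem_map.mp (Multiset.mem_coe.mp hx)
      exact le_trans (le_trans (hfa (by omega : L - 1 ≤ L + t)) hfy) (le_refl _)
    · obtain ⟨j, hj, rfl⟩ := Multiset.mem_map.mp hx
      rw [Finset.range_val, Multiset.mem_range] at hj
      exact le_trans (hgf j hj) hfy
  have key := dsort_take R ((List.range L).map f) hs hb
  have hlen : ((List.range L).map f).length = L := by simp
  rw [hlen] at key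
  rw [hZ]
  exact key
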